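/- Fix real parameters r, s, c₃ and c ≥ 0 with |s| < 1, such that H₊(z) ≤ 1+sz and H₋(z) ≤ 1−sz for all z ∈ [0,1]. If s ≤ 0, r·c₃ ≥ 0, and c₃² − c² ≥ s·r·c₃, then F(z) ≤ F(1) for all z ∈ [0,1], and F(1) = (1/4)(1+s+r+c₃)log₂((1+s+r+c₃)/(1+s)) + (1/4)(1+s−r−c₃)log₂((1+s−r−c₃)/(1+s)) + (1/4)(1−s+r−c₃)log₂((1−s+r−c₃)/(1−s)) + (1/4)(1−s−r+c₃)log₂((1−s−r+c₃)/(1−s)). -/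

import Mathlib

/-- `H₊(z) = √(c²(1−z²)+(r+c₃z)²)`. -/
noncomputable def Hp (r c₃ c z : ℝ) : ℝ := Real.sqrt (c^2*(1 - z^2) + (r + c₃*z)^2)

/-- `H₋(z) = √(c²(1−z²)+(r−c₃z)²)`. -/
noncomputable def Hm (r c₃ c z : ℝ) : ℝ := Real.sqrt (c^2*(1 - z^2) + (r - c₃*z)^2)

/-- The one-variable function `F(z)` from the quantum discord of X-states. -/
noncomputable def F (r s c₃ c z : ℝ) : ℝ :=
  (1/4) * (1 + s*z + Hp r c₃ c z) * Real.logb 2 ((1 + s*z + Hp r c₃ c z) / (1 + s*z)) +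
  (1/4) * (1 + s*z - Hp r c₃ c z) * Real.logb 2 ((1 + s*z - Hp r c₃ c z) / (1 + s*z)) +
  (1/4) * (1 - s*z + Hm r c₃ c z) * Real.logb 2 ((1 - s*z + Hm r c₃ c z) / (1 - s*z)) +
  (1/4) * (1 - s*z - Hm r c₃ c z) * Real.logb 2 ((1 - s*z - Hm r c₃ c z) / (1 - s*z))



section QuantumDiscordAux
open Real

noncomputable def Gfun (r s c₃ c z : ℝ) : ℝ :=
  ((1+s*z+Hp r c₃ c z) * Real.log (1+s*z+Hp r c₃ c z)
   + (1+s*z-Hp r c₃ c z) * Real.log (1+s*z-Hp r c₃ c z)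
   + (1-s*z+Hm r c₃ c z) * Real.log (1-s*z+Hm r c₃ c z)
   + (1-s*z-Hm r c₃ c z) * Real.log (1-s*z-Hm r c₃ c z)
   - 2*((1+s*z) * Real.log (1+s*z)) - 2*((1-s*z) * Real.log (1-s*z))) / (4*Real.log 2)

/-- `(1-x²)·L(x) ≤ 2x` on `[0,1)`, where `L x = log(1+x) - log(1-x)`. -/
lemma aux_L_bound {x : ℝ} (h0 : 0 ≤ x) (h1 : x < 1) :
    (1 - x^2) * (Real.log (1+x) - Real.log (1-x)) ≤ 2*x := by
  set g : ℝ → ℝ := fun x => 2*x - (1 - x^2) * (Real.log (1+x) - Real.log (1-x)) with hg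
  have key : ∀ y ∈ Set.Ico (0:ℝ) 1, HasDerivAt g
      (2*y*(Real.log (1+y) - Real.log (1-y))) y := by
    intro y hy
    obtain ⟨hy0, hy1⟩ := hy
    have h1y : (0:ℝ) < 1 + y := by linarith
    have h2y : (0:ℝ) < 1 - y := by linarith
    have d1 : HasDerivAt (fun x : ℝ => Real.log (1+x)) (1/(1+y)) y := by
      have : HasDerivAt (fun x : ℝ => 1 + x) 1 y := (hasDerivAt_id y).const_add 1
      simpa using this.log h1y.ne'
    have d2 : HasDerivAt (fun x : ℝ => Real.log (1-x)) (-(1/(1-y))) y := by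
      have : HasDerivAt (fun x : ℝ => 1 - x) (-1) y := (hasDerivAt_id y).const_sub 1
      have := this.log h2y.ne'
      convert this using 1
      field_simp
    have d3 : HasDerivAt (fun x : ℝ => 1 - x^2) (-(2*y)) y := by
      have := (hasDerivAt_pow 2 y).const_sub 1
      simpa using this
    have d4 : HasDerivAt g
        (2 - ((-(2*y)) * (Real.log (1+y) - Real.log (1-y)) +
          (1 - y^2) * (1/(1+y) - -(1/(1-y))))) y := by
      have dl : HasDerivAt (fun x : ℝ => Real.log (1+x) - Real.log (1-x))
          (1/(1+y) - -(1/(1-y))) y := d1.sub d2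
      have dmul := d3.fun_mul dl
      have dlin : HasDerivAt (fun x : ℝ => 2*x) 2 y := by
        simpa using (hasDerivAt_id y).const_mul 2
      simpa [hg] using dlin.fun_sub dmul
    convert d4 using 1
    have hne : (1:ℝ) - y^2 ≠ 0 := by nlinarith
    have e : 1/(1+y) - -(1/(1-y)) = 2/(1-y^2) := by
      rw [sub_neg_eq_add, div_add_div _ _ h1y.ne' h2y.ne']
      congr 1 <;> ring
    rw [e]
    have e2 : (1 - y^2) * (2/(1-y^2)) = 2 := by
      rw [mul_div_assoc']
      exact mul_div_cancel_left₀ 2 hne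
    rw [e2]
    ring
  have mono : MonotoneOn g (Set.Ico (0:ℝ) 1) := by
    apply monotoneOn_of_deriv_nonneg (convex_Ico 0 1)
    · intro y hy
      exact (key y hy).continuousAt.continuousWithinAt
    · rw [interior_Ico]
      intro y hy
      exact (key y ⟨hy.1.le, hy.2⟩).differentiableAt.differentiableWithinAt
    · rw [interior_Ico]
      intro y hy
      rw [(key y ⟨hy.1.le, hy.2⟩).deriv]
      have : Real.log (1-y) ≤ Real.log (1+y) :=
        Real.log_le_log (by linarith [hy.2]) (by linarith [hy.1])
      have hy0 := hy.1
      nlinarith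
  have h00 : g 0 ≤ g x := mono ⟨le_refl 0, one_pos⟩ ⟨h0, h1⟩ h0
  simp [hg] at h00
  linarith

/-- `L(u)/u ≤ L(t)/t` for `0 < u ≤ t < 1`. -/
lemma aux_L_div_mono {u t : ℝ} (hu : 0 < u) (hut : u ≤ t) (ht : t < 1) :
    (Real.log (1+u) - Real.log (1-u))/u ≤ (Real.log (1+t) - Real.log (1-t))/t := by
  have ht0 : 0 < t := lt_of_lt_of_le hu hut
  rw [div_le_div_iff₀ hu ht0]
  -- suffices: L(u) * t ≤ L(t) * u,  i.e.  u * L(t) - t * L(u) ≥ 0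
  set Lu : ℝ := Real.log (1+u) - Real.log (1-u) with hLu
  have hLu0 : 0 ≤ Lu := by
    have : Real.log (1-u) ≤ Real.log (1+u) :=
      Real.log_le_log (by linarith) (by linarith)
    simp [hLu]; linarith
  set φ : ℝ → ℝ := fun x => u * (Real.log (1+x) - Real.log (1-x)) - x * Lu with hφ
  have key : ∀ y ∈ Set.Ico u 1, HasDerivAt φ (u * (1/(1+y) - -(1/(1-y))) - Lu) y := by
    intro y hy
    have h1y : (0:ℝ) < 1 + y := by linarith [hy.1]
    have h2y : (0:ℝ) < 1 - y := by linarith [hy.2]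
    have d1 : HasDerivAt (fun x : ℝ => Real.log (1+x)) (1/(1+y)) y := by
      have : HasDerivAt (fun x : ℝ => 1 + x) 1 y := (hasDerivAt_id y).const_add 1
      simpa using this.log h1y.ne'
    have d2 : HasDerivAt (fun x : ℝ => Real.log (1-x)) (-(1/(1-y))) y := by
      have : HasDerivAt (fun x : ℝ => 1 - x) (-1) y := (hasDerivAt_id y).const_sub 1
      have := this.log h2y.ne'
      convert this using 1
      field_simp
    have d3 : HasDerivAt (fun x : ℝ => x * Lu) Lu y := by
      simpa using (hasDerivAt_id y).mul_const Lu
    simpa [hφ] using ((d1.sub d2).const_mul u).fun_sub d3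
  have mono : MonotoneOn φ (Set.Ico u 1) := by
    apply monotoneOn_of_deriv_nonneg (convex_Ico u 1)
    · intro y hy
      exact (key y hy).continuousAt.continuousWithinAt
    · rw [interior_Ico]
      intro y hy
      exact (key y ⟨hy.1.le, hy.2⟩).differentiableAt.differentiableWithinAt
    · rw [interior_Ico]
      intro y hy
      rw [(key y ⟨hy.1.le, hy.2⟩).deriv]
      have h1y : (0:ℝ) < 1 + y := by linarith [hu.trans hy.1]
      have h2y : (0:ℝ) < 1 - y := by linarith [hy.2]
      have hyn : (1:ℝ) - y^2 ≠ 0 := by nlinarith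
      have e : 1/(1+y) - -(1/(1-y)) = 2/(1-y^2) := by
        rw [sub_neg_eq_add, div_add_div _ _ h1y.ne' h2y.ne']
        congr 1 <;> ring
      rw [e]
      -- u * (2/(1-y²)) ≥ u * (2/(1-u²)) ≥ Lu
      have hb := aux_L_bound hu.le (lt_of_le_of_lt hut ht)
      rw [← hLu] at hb
      have hy2 : (0:ℝ) < 1 - y^2 := by nlinarith
      have hu2 : (0:ℝ) < 1 - u^2 := by nlinarith
      rw [sub_nonneg]
      calc Lu ≤ 2*u/(1-u^2) := by rw [le_div_iff₀ hu2]; nlinarith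
        _ ≤ 2*u/(1-y^2) := by
            apply div_le_div_of_nonneg_left (by linarith) hy2
            nlinarith [hy.1, hu]
        _ = u * (2/(1-y^2)) := by ring
  have h0 : φ u ≤ φ t := mono ⟨le_refl u, lt_of_le_of_lt hut ht⟩ ⟨hut, ht⟩ hut
  have hφu : φ u = 0 := by simp [hφ, hLu]
  rw [hφu] at h0
  simp only [hφ] at h0
  nlinarith [h0]

/-- If `f` is continuous on `[x,y]` and differentiable with nonnegative derivative on
`(x,y)` outside a finite exceptional set, then `f x ≤ f y`. -/
lemma aux_chain : ∀ (n : ℕ) (E : Finset ℝ) (f : ℝ → ℝ) (x y : ℝ), E.card ≤ n → x ≤ y →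
    ContinuousOn f (Set.Icc x y) →
    (∀ w ∈ Set.Ioo x y, w ∉ E → DifferentiableAt ℝ f w ∧ 0 ≤ deriv f w) →
    f x ≤ f y := by
  intro n
  induction n with
  | zero =>
    intro E f x y hcard hxy hcont hder
    rcases eq_or_lt_of_le hxy with rfl | hlt
    · exact le_refl _
    have hE : E = ∅ := Finset.card_eq_zero.mp (le_antisymm hcard (Nat.zero_le _))
    subst hE
    have mono : MonotoneOn f (Set.Icc x y) := by
      apply monotoneOn_of_deriv_nonneg (convex_Icc x y) hcont
      · rw [interior_Icc]
        intro w hw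
        exact (hder w hw (by simp)).1.differentiableWithinAt
      · rw [interior_Icc]
        intro w hw
        exact (hder w hw (by simp)).2
    exact mono (Set.left_mem_Icc.2 hxy) (Set.right_mem_Icc.2 hxy) hxy
  | succ n ih =>
    intro E f x y hcard hxy hcont hder
    by_cases hex : ∃ e ∈ E, e ∈ Set.Ioo x y
    · obtain ⟨e, heE, hexy⟩ := hex
      have hcard' : (E.erase e).card ≤ n := by
        have := Finset.card_erase_of_mem heE
        omega
      have h1 : f x ≤ f e := by
        apply ih (E.erase e) f x e hcard' hexy.1.le
          (hcont.mono (Set.Icc_subset_Icc le_rfl hexy.2.le))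
        intro w hw hwE
        refine hder w ⟨hw.1, hw.2.trans hexy.2⟩ ?_
        intro hwEmem
        exact hwE (Finset.mem_erase.2 ⟨ne_of_lt hw.2, hwEmem⟩)
      have h2 : f e ≤ f y := by
        apply ih (E.erase e) f e y hcard' hexy.2.le
          (hcont.mono (Set.Icc_subset_Icc hexy.1.le le_rfl))
        intro w hw hwE
        refine hder w ⟨hexy.1.trans hw.1, hw.2⟩ ?_
        intro hwEmem
        exact hwE (Finset.mem_erase.2 ⟨(ne_of_lt hw.1).symm, hwEmem⟩)
      exact h1.trans h2
    · push_neg at hex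
      rcases eq_or_lt_of_le hxy with rfl | hlt
      · exact le_refl _
      have mono : MonotoneOn f (Set.Icc x y) := by
        apply monotoneOn_of_deriv_nonneg (convex_Icc x y) hcont
        · rw [interior_Icc]
          intro w hw
          exact (hder w hw (fun hm => absurd hw (hex w hm))).1.differentiableWithinAt
        · rw [interior_Icc]
          intro w hw
          exact (hder w hw (fun hm => absurd hw (hex w hm))).2
      exact mono (Set.left_mem_Icc.2 hxy) (Set.right_mem_Icc.2 hxy) hxy

/-- Roots of a not-identically-zero real quadratic form a finite set. -/
lemma aux_quad_finite (α β γ : ℝ) (h : ¬(α = 0 ∧ β = 0 ∧ γ = 0)) :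
    {x : ℝ | α*x^2 + β*x + γ = 0}.Finite := by
  rcases eq_or_ne α 0 with rfl | hα
  · rcases eq_or_ne β 0 with rfl | hβ
    · have hγ : γ ≠ 0 := by
        intro hγ; exact h ⟨rfl, rfl, hγ⟩
      convert Set.finite_empty
      ext x
      simp [hγ]
    · apply Set.Finite.subset (Set.finite_singleton (-γ/β))
      intro x hx
      simp only [Set.mem_setOf_eq] at hx
      simp only [Set.mem_singleton_iff]
      field_simp
      linarith [hx]
  · apply Set.Finite.subset
      ((Set.finite_singleton ((-β - Real.sqrt (β^2 - 4*α*γ))/(2*α))).insert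
        ((-β + Real.sqrt (β^2 - 4*α*γ))/(2*α)))
    intro x hx
    simp only [Set.mem_setOf_eq] at hx
    have hsq : (2*α*x + β)^2 = β^2 - 4*α*γ := by linear_combination 4*α*hx
    have hs : Real.sqrt (β^2 - 4*α*γ) = |2*α*x + β| := by
      rw [← hsq, Real.sqrt_sq_eq_abs]
    rw [Set.mem_insert_iff, Set.mem_singleton_iff]
    rcases abs_cases (2*α*x + β) with ⟨he, _⟩ | ⟨he, _⟩
    · left
      rw [hs, he]
      field_simp
      ring
    · right
      rw [hs, he]
      field_simp
      ring

lemma aux_bracket_nonneg (s w p q h k : ℝ) (hs0 : s ≤ 0) (hw : 0 ≤ w)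
    (hp : 0 ≤ p) (hq : s*p ≤ q) (hh : 0 < h) (hk : 0 < k) (hkh : k ≤ h)
    (hha : h < 1 + s*w) (hkb : k < 1 - s*w) :
    0 ≤ (Real.log (1+s*w+h) + 1)*(s + (p+q*w)/h) + (Real.log (1+s*w-h) + 1)*(s - (p+q*w)/h)
      + (Real.log (1-s*w+k) + 1)*(-s + (q*w-p)/k) + (Real.log (1-s*w-k) + 1)*(-s - (q*w-p)/k)
      - 2*(Real.log (1+s*w) + 1)*s - 2*(Real.log (1-s*w) + 1)*(-s) := by
  set a : ℝ := 1 + s*w with hadef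
  set b : ℝ := 1 - s*w with hbdef
  have ha : 0 < a := hh.trans hha
  have hb : 0 < b := hk.trans hkb
  have hab : a ≤ b := by
    have : s*w ≤ 0 := mul_nonpos_of_nonpos_of_nonneg hs0 hw
    simp only [hadef, hbdef]; linarith
  have hah : 0 < a + h := by linarith
  have hah' : 0 < a - h := by linarith
  have hbk : 0 < b + k := by linarith
  have hbk' : 0 < b - k := by linarith
  clear_value a b
  set LA1 : ℝ := Real.log (a+h) with hLA1
  set LA2 : ℝ := Real.log (a-h) with hLA2
  set LB1 : ℝ := Real.log (b+k) with hLB1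
  set LB2 : ℝ := Real.log (b-k) with hLB2
  clear_value LA1 LA2 LB1 LB2
  have key : (LA1 + 1)*(s + (p+q*w)/h) + (LA2 + 1)*(s - (p+q*w)/h)
      + (LB1 + 1)*(-s + (q*w-p)/k) + (LB2 + 1)*(-s - (q*w-p)/k)
      - 2*(Real.log a + 1)*s - 2*(Real.log b + 1)*(-s)
      = s*((LA1 + LA2 - 2*Real.log a) - (LB1 + LB2 - 2*Real.log b))
        + p*(a*(LA1-LA2)/h - b*(LB1-LB2)/k)
        + (q - s*p)*(w*((LA1-LA2)/h + (LB1-LB2)/k)) := by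
    rw [hadef, hbdef]
    field_simp
    ring
  rw [key]
  have hak : a*k ≤ b*h := mul_le_mul hab hkh hk.le hb.le
  -- Part 1
  have part1 : 0 ≤ s*((LA1 + LA2 - 2*Real.log a) - (LB1 + LB2 - 2*Real.log b)) := by
    have hX : (LA1 + LA2 - 2*Real.log a) - (LB1 + LB2 - 2*Real.log b) ≤ 0 := by
      rw [sub_nonpos]
      have e1 : LA1 + LA2 = Real.log ((a+h)*(a-h)) := by
        rw [hLA1, hLA2]; exact (Real.log_mul hah.ne' hah'.ne').symm
      have e2 : LB1 + LB2 = Real.log ((b+k)*(b-k)) := by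
        rw [hLB1, hLB2]; exact (Real.log_mul hbk.ne' hbk'.ne').symm
      have e3 : 2*Real.log a = Real.log (a^2) := by rw [Real.log_pow]; norm_num
      have e4 : 2*Real.log b = Real.log (b^2) := by rw [Real.log_pow]; norm_num
      rw [e1, e2, e3, e4, sub_le_sub_iff, ← Real.log_mul (by positivity) (by positivity),
        ← Real.log_mul (by positivity) (by positivity)]
      apply Real.log_le_log (by positivity)
      nlinarith [mul_le_mul hak hak (by positivity : (0:ℝ) ≤ a*k) (by positivity : (0:ℝ) ≤ b*h)]
    exact mul_nonneg_of_nonpos_of_nonpos hs0 hX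
  -- Part 2
  have part2 : 0 ≤ p*(a*(LA1-LA2)/h - b*(LB1-LB2)/k) := by
    apply mul_nonneg hp
    rw [sub_nonneg]
    have hta : h/a < 1 := (div_lt_one ha).2 (by linarith)
    have hub : 0 < k/b := div_pos hk hb
    have hut : k/b ≤ h/a := by
      rw [div_le_div_iff₀ hb ha]
      exact mul_le_mul hkh hab ha.le hh.le
    have hmono := aux_L_div_mono hub hut hta
    have h1a : (0:ℝ) < 1 + h/a := by positivity
    have h2a : (0:ℝ) < 1 - h/a := by linarith
    have h1b : (0:ℝ) < 1 + k/b := by positivity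
    have h2b : (0:ℝ) < 1 - k/b := by
      have : k/b < 1 := (div_lt_one hb).2 (by linarith)
      linarith
    have eA1 : LA1 = Real.log a + Real.log (1 + h/a) := by
      rw [hLA1, show a + h = a*(1+h/a) by field_simp, Real.log_mul ha.ne' h1a.ne']
    have eA2 : LA2 = Real.log a + Real.log (1 - h/a) := by
      rw [hLA2, show a - h = a*(1-h/a) by field_simp, Real.log_mul ha.ne' h2a.ne']
    have eB1 : LB1 = Real.log b + Real.log (1 + k/b) := by
      rw [hLB1, show b + k = b*(1+k/b) by field_simp, Real.log_mul hb.ne' h1b.ne']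
    have eB2 : LB2 = Real.log b + Real.log (1 - k/b) := by
      rw [hLB2, show b - k = b*(1-k/b) by field_simp, Real.log_mul hb.ne' h2b.ne']
    have eA : a*(LA1-LA2)/h = (Real.log (1+h/a) - Real.log (1-h/a))/(h/a) := by
      rw [eA1, eA2, div_div_eq_mul_div]
      field_simp
      ring
    have eB : b*(LB1-LB2)/k = (Real.log (1+k/b) - Real.log (1-k/b))/(k/b) := by
      rw [eB1, eB2, div_div_eq_mul_div]
      field_simp
      ring
    rw [eA, eB]
    exact hmono
  -- Part 3
  have part3 : 0 ≤ (q - s*p)*(w*((LA1-LA2)/h + (LB1-LB2)/k)) := by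
    apply mul_nonneg (by linarith)
    apply mul_nonneg hw
    apply add_nonneg
    · apply div_nonneg _ hh.le
      rw [sub_nonneg, hLA1, hLA2]
      exact Real.log_le_log hah' (by linarith)
    · apply div_nonneg _ hk.le
      rw [sub_nonneg, hLB1, hLB2]
      exact Real.log_le_log hbk' (by linarith)
  linarith

lemma hasDerivAt_Gfun (r s c₃ c w : ℝ)
    (hP : 0 < c^2*(1-w^2) + (r+c₃*w)^2) (hPm : 0 < c^2*(1-w^2) + (r-c₃*w)^2)
    (hah : Hp r c₃ c w < 1+s*w) (hbk : Hm r c₃ c w < 1-s*w) :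
    HasDerivAt (fun z => Gfun r s c₃ c z)
      (((Real.log (1+s*w+Hp r c₃ c w) + 1)*(s + (r*c₃+(c₃^2-c^2)*w)/Hp r c₃ c w)
        + (Real.log (1+s*w-Hp r c₃ c w) + 1)*(s - (r*c₃+(c₃^2-c^2)*w)/Hp r c₃ c w)
        + (Real.log (1-s*w+Hm r c₃ c w) + 1)*(-s + ((c₃^2-c^2)*w - r*c₃)/Hm r c₃ c w)
        + (Real.log (1-s*w-Hm r c₃ c w) + 1)*(-s - ((c₃^2-c^2)*w - r*c₃)/Hm r c₃ c w)
        - 2*(Real.log (1+s*w) + 1)*s - 2*(Real.log (1-s*w) + 1)*(-s)) / (4*Real.log 2)) w := by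
  have hh : 0 < Hp r c₃ c w := Real.sqrt_pos.2 hP
  have hk : 0 < Hm r c₃ c w := Real.sqrt_pos.2 hPm
  have ha : 0 < 1 + s*w := hh.trans hah
  have hb : 0 < 1 - s*w := hk.trans hbk
  have hah1 : 0 < 1 + s*w + Hp r c₃ c w := by linarith
  have hah2 : 0 < 1 + s*w - Hp r c₃ c w := by linarith
  have hbk1 : 0 < 1 - s*w + Hm r c₃ c w := by linarith
  have hbk2 : 0 < 1 - s*w - Hm r c₃ c w := by linarith
  have dA : HasDerivAt (fun z : ℝ => 1 + s*z) s w := by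
    simpa using ((hasDerivAt_id w).const_mul s).const_add 1
  have dB : HasDerivAt (fun z : ℝ => 1 - s*z) (-s) w := by
    simpa using ((hasDerivAt_id w).const_mul s).const_sub 1
  have dP : HasDerivAt (fun z : ℝ => c^2*(1-z^2) + (r+c₃*z)^2)
      (2*(r*c₃+(c₃^2-c^2)*w)) w := by
    have d1 : HasDerivAt (fun z : ℝ => c^2*(1-z^2)) (c^2 * (-(2*w))) w := by
      have : HasDerivAt (fun z : ℝ => 1 - z^2) (-(2*w)) w := by
        simpa using (hasDerivAt_pow 2 w).const_sub 1
      exact this.const_mul (c^2)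
    have d2 : HasDerivAt (fun z : ℝ => (r+c₃*z)^2) (2*(r+c₃*w)*c₃) w := by
      have hlin : HasDerivAt (fun z : ℝ => r + c₃*z) c₃ w := by
        simpa using ((hasDerivAt_id w).const_mul c₃).const_add r
      simpa using hlin.fun_pow 2
    refine (d1.fun_add d2).congr_deriv ?_
    ring
  have dPm : HasDerivAt (fun z : ℝ => c^2*(1-z^2) + (r-c₃*z)^2)
      (2*((c₃^2-c^2)*w - r*c₃)) w := by
    have d1 : HasDerivAt (fun z : ℝ => c^2*(1-z^2)) (c^2 * (-(2*w))) w := by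
      have : HasDerivAt (fun z : ℝ => 1 - z^2) (-(2*w)) w := by
        simpa using (hasDerivAt_pow 2 w).const_sub 1
      exact this.const_mul (c^2)
    have d2 : HasDerivAt (fun z : ℝ => (r-c₃*z)^2) (2*(r-c₃*w)*(-c₃)) w := by
      have hlin : HasDerivAt (fun z : ℝ => r - c₃*z) (-c₃) w := by
        simpa using ((hasDerivAt_id w).const_mul c₃).const_sub r
      simpa using hlin.fun_pow 2
    refine (d1.fun_add d2).congr_deriv ?_
    ring
  have dh : HasDerivAt (fun z => Hp r c₃ c z) ((r*c₃+(c₃^2-c^2)*w)/Hp r c₃ c w) w := by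
    have := dP.sqrt hP.ne'
    simp only [Hp]
    convert this using 1
    have hroot : (0:ℝ) < Real.sqrt (c^2*(1-w^2)+(r+c₃*w)^2) := Real.sqrt_pos.2 hP
    exact (mul_div_mul_left _ _ two_ne_zero).symm
  have dk : HasDerivAt (fun z => Hm r c₃ c z) (((c₃^2-c^2)*w - r*c₃)/Hm r c₃ c w) w := by
    have := dPm.sqrt hPm.ne'
    simp only [Hm]
    convert this using 1
    have hroot : (0:ℝ) < Real.sqrt (c^2*(1-w^2)+(r-c₃*w)^2) := Real.sqrt_pos.2 hPm
    exact (mul_div_mul_left _ _ two_ne_zero).symm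
  have dE1 : HasDerivAt (fun z => (1+s*z+Hp r c₃ c z) * Real.log (1+s*z+Hp r c₃ c z))
      ((Real.log (1+s*w+Hp r c₃ c w) + 1)*(s + (r*c₃+(c₃^2-c^2)*w)/Hp r c₃ c w)) w :=
    by have := (Real.hasDerivAt_mul_log hah1.ne').comp w (dA.fun_add dh); exact this
  have dE2 : HasDerivAt (fun z => (1+s*z-Hp r c₃ c z) * Real.log (1+s*z-Hp r c₃ c z))
      ((Real.log (1+s*w-Hp r c₃ c w) + 1)*(s - (r*c₃+(c₃^2-c^2)*w)/Hp r c₃ c w)) w :=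
    by have := (Real.hasDerivAt_mul_log hah2.ne').comp w (dA.fun_sub dh); exact this
  have dE3 : HasDerivAt (fun z => (1-s*z+Hm r c₃ c z) * Real.log (1-s*z+Hm r c₃ c z))
      ((Real.log (1-s*w+Hm r c₃ c w) + 1)*(-s + ((c₃^2-c^2)*w - r*c₃)/Hm r c₃ c w)) w :=
    by have := (Real.hasDerivAt_mul_log hbk1.ne').comp w (dB.fun_add dk); exact this
  have dE4 : HasDerivAt (fun z => (1-s*z-Hm r c₃ c z) * Real.log (1-s*z-Hm r c₃ c z))
      ((Real.log (1-s*w-Hm r c₃ c w) + 1)*(-s - ((c₃^2-c^2)*w - r*c₃)/Hm r c₃ c w)) w :=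
    by have := (Real.hasDerivAt_mul_log hbk2.ne').comp w (dB.fun_sub dk); exact this
  have dEa : HasDerivAt (fun z => (1+s*z) * Real.log (1+s*z))
      ((Real.log (1+s*w) + 1)*s) w := by have := (Real.hasDerivAt_mul_log ha.ne').comp w dA; exact this
  have dEb : HasDerivAt (fun z => (1-s*z) * Real.log (1-s*z))
      ((Real.log (1-s*w) + 1)*(-s)) w := by have := (Real.hasDerivAt_mul_log hb.ne').comp w dB; exact this
  have total := ((((dE1.fun_add dE2).fun_add dE3).fun_add dE4).fun_sub (dEa.const_mul 2)).fun_sub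
    (dEb.const_mul 2) |>.div_const (4*Real.log 2)
  refine total.congr_deriv ?_
  ring

lemma aux_term_eq (x aa : ℝ) (hx : 0 ≤ x) (ha : 0 < aa) :
    (1/4 : ℝ) * x * Real.logb 2 (x/aa) = (x * Real.log x - x * Real.log aa)/(4*Real.log 2) := by
  rcases eq_or_lt_of_le hx with h | h
  · rw [← h]; simp
  · have hlog2 : Real.log 2 ≠ 0 := (Real.log_pos one_lt_two).ne'
    rw [Real.logb, Real.log_div h.ne' ha.ne']
    field_simp

lemma aux_sz_bound {s z : ℝ} (hs : |s| < 1) (hz : z ∈ Set.Icc (0:ℝ) 1) :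
    0 < 1 + s*z ∧ 0 < 1 - s*z := by
  have h1 : |s*z| < 1 := by
    rw [abs_mul]
    calc |s| * |z| ≤ |s| * 1 := by
          apply mul_le_mul_of_nonneg_left _ (abs_nonneg s)
          rw [abs_of_nonneg hz.1]; exact hz.2
      _ < 1 := by rw [mul_one]; exact hs
  have := abs_lt.1 h1
  constructor <;> linarith [this.1, this.2]

lemma F_eq_Gfun (r s c₃ c : ℝ) (hs : |s| < 1)
    (hHp : ∀ z ∈ Set.Icc (0:ℝ) 1, Hp r c₃ c z ≤ 1 + s*z)
    (hHm : ∀ z ∈ Set.Icc (0:ℝ) 1, Hm r c₃ c z ≤ 1 - s*z) :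
    ∀ z ∈ Set.Icc (0:ℝ) 1, F r s c₃ c z = Gfun r s c₃ c z := by
  intro z hz
  obtain ⟨ha, hb⟩ := aux_sz_bound hs hz
  have hHp0 : (0:ℝ) ≤ Hp r c₃ c z := Real.sqrt_nonneg _
  have hHm0 : (0:ℝ) ≤ Hm r c₃ c z := Real.sqrt_nonneg _
  have h1 : (0:ℝ) ≤ 1 + s*z + Hp r c₃ c z := by linarith
  have h2 : (0:ℝ) ≤ 1 + s*z - Hp r c₃ c z := by linarith [hHp z hz]
  have h3 : (0:ℝ) ≤ 1 - s*z + Hm r c₃ c z := by linarith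
  have h4 : (0:ℝ) ≤ 1 - s*z - Hm r c₃ c z := by linarith [hHm z hz]
  have hlog2 : Real.log 2 ≠ 0 := (Real.log_pos one_lt_two).ne'
  rw [F, Gfun, aux_term_eq _ _ h1 ha, aux_term_eq _ _ h2 ha, aux_term_eq _ _ h3 hb,
    aux_term_eq _ _ h4 hb]
  field_simp
  ring

lemma continuous_Gfun (r s c₃ c : ℝ) : Continuous (fun z => Gfun r s c₃ c z) := by
  have hsq1 : Continuous (Hp r c₃ c) := by
    unfold Hp
    exact Continuous.sqrt (by continuity)
  have hsq2 : Continuous (Hm r c₃ c) := by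
    unfold Hm
    exact Continuous.sqrt (by continuity)
  have hA : Continuous (fun z : ℝ => 1 + s*z) := by continuity
  have hB : Continuous (fun z : ℝ => 1 - s*z) := by continuity
  have e1 := Real.continuous_mul_log.comp (hA.add hsq1)
  have e2 := Real.continuous_mul_log.comp (hA.sub hsq1)
  have e3 := Real.continuous_mul_log.comp (hB.add hsq2)
  have e4 := Real.continuous_mul_log.comp (hB.sub hsq2)
  have ea := Real.continuous_mul_log.comp hA
  have eb := Real.continuous_mul_log.comp hB
  unfold Gfun
  exact (((((e1.add e2).add e3).add e4).sub (continuous_const.mul ea)).sub (continuous_const.mul eb)).div_const _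

/-- the constant degenerate configuration -/
lemma aux_const_case (r s c₃ c : ℝ) (h1 : c^2 + r^2 = 1) (h2 : r*c₃ = 0)
    (h3 : c₃^2 = c^2) (hs0 : s = 0) :
    ∀ z ∈ Set.Icc (0:ℝ) 1, F r s c₃ c z ≤ F r s c₃ c 1 := by
  subst hs0
  have hF : ∀ z : ℝ, F r 0 c₃ c z = 1 := by
    intro z
    have hHp1 : Hp r c₃ c z = 1 := by
      rw [Hp, show c^2*(1 - z^2) + (r + c₃*z)^2 = 1 by
        linear_combination h1 + z^2*h3 + 2*z*h2]
      exact Real.sqrt_one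
    have hHm1 : Hm r c₃ c z = 1 := by
      rw [Hm, show c^2*(1 - z^2) + (r - c₃*z)^2 = 1 by
        linear_combination h1 + z^2*h3 - 2*z*h2]
      exact Real.sqrt_one
    rw [F, hHp1, hHm1]
    norm_num
  intro z _
  rw [hF z, hF 1]

lemma aux_main (r s c₃ c : ℝ) (hc : 0 ≤ c) (hs : |s| < 1)
    (hr : 0 ≤ r) (hc3 : 0 ≤ c₃)
    (hHp : ∀ z ∈ Set.Icc (0:ℝ) 1, Hp r c₃ c z ≤ 1 + s*z)
    (hHm : ∀ z ∈ Set.Icc (0:ℝ) 1, Hm r c₃ c z ≤ 1 - s*z)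
    (hs0 : s ≤ 0) (hmix : s * (r * c₃) ≤ c₃^2 - c^2) :
    ∀ z ∈ Set.Icc (0:ℝ) 1, F r s c₃ c z ≤ F r s c₃ c 1 := by
  -- trivial case r = c₃ = 0
  by_cases hrz : r = 0 ∧ c₃ = 0
  · obtain ⟨rfl, rfl⟩ := hrz
    have hc0 : c = 0 := by nlinarith [sq_nonneg c]
    subst hc0
    have hF : ∀ z ∈ Set.Icc (0:ℝ) 1, F 0 s 0 0 z = 0 := by
      intro z hz
      obtain ⟨ha, hb⟩ := aux_sz_bound hs hz
      have hHp0 : Hp 0 0 0 z = 0 := by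
        rw [Hp]; simp
      have hHm0 : Hm 0 0 0 z = 0 := by
        rw [Hm]; simp
      rw [F, hHp0, hHm0]
      rw [add_zero, sub_zero, add_zero, sub_zero, div_self ha.ne', div_self hb.ne']
      simp
    intro z hz
    rw [hF z hz, hF 1 (by norm_num)]
  -- degenerate case A : Q₊ ≡ 0
  by_cases hdA : 1 - c^2 - r^2 = 0 ∧ s - r*c₃ = 0 ∧ s^2 - (c₃^2 - c^2) = 0
  · obtain ⟨hA1, hA2, hA3⟩ := hdA
    have hp0 : 0 ≤ r*c₃ := mul_nonneg hr hc3
    have hseq : s = 0 := le_antisymm hs0 (by linarith)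
    have hrc : r*c₃ = 0 := by linarith [hseq]
    have hc₃c : c₃^2 = c^2 := by linear_combination s*hseq - hA3
    exact aux_const_case r s c₃ c (by linarith) hrc hc₃c hseq
  -- degenerate case B : Q₋ ≡ 0
  by_cases hdB : 1 - c^2 - r^2 = 0 ∧ r*c₃ - s = 0 ∧ s^2 - (c₃^2 - c^2) = 0
  · obtain ⟨hB1, hB2, hB3⟩ := hdB
    have hp0 : 0 ≤ r*c₃ := mul_nonneg hr hc3
    have hseq : s = 0 := le_antisymm hs0 (by linarith)
    have hrc : r*c₃ = 0 := by linarith [hseq]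
    have hc₃c : c₃^2 = c^2 := by linear_combination s*hseq - hB3
    exact aux_const_case r s c₃ c (by linarith) hrc hc₃c hseq
  -- main case
  push_neg at hrz
  have hEA : {x : ℝ | (s^2-(c₃^2-c^2))*x^2 + (2*(s-r*c₃))*x + (1-c^2-r^2) = 0}.Finite := by
    apply aux_quad_finite
    rintro ⟨h1, h2, h3⟩
    exact hdA ⟨h3, by linarith, h1⟩
  have hEB : {x : ℝ | (s^2-(c₃^2-c^2))*x^2 + (2*(r*c₃-s))*x + (1-c^2-r^2) = 0}.Finite := by
    apply aux_quad_finite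
    rintro ⟨h1, h2, h3⟩
    exact hdB ⟨h3, by linarith, h1⟩
  have hEC : {x : ℝ | c^2*(1-x^2) + (r-c₃*x)^2 = 0 ∧ x ∈ Set.Ioo (0:ℝ) 1}.Finite := by
    rcases hc.eq_or_lt with hc0 | hcpos
    · -- c = 0
      rcases eq_or_ne c₃ 0 with hc30 | hc3ne
      · -- r ≠ 0
        have hrne : r ≠ 0 := fun h0 => hrz h0 hc30
        apply Set.Finite.subset (Set.finite_empty)
        rintro x ⟨hx, _⟩
        exfalso
        rw [← hc0, hc30] at hx
        apply hrne
        nlinarith [hx, sq_nonneg r]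
      · apply Set.Finite.subset (Set.finite_singleton (r/c₃))
        rintro x ⟨hx, _⟩
        rw [← hc0] at hx
        have : r - c₃*x = 0 := by nlinarith [sq_nonneg (r - c₃*x)]
        simp only [Set.mem_singleton_iff]
        field_simp
        linarith
    · apply Set.Finite.subset (Set.finite_empty)
      rintro x ⟨hx, hx2⟩
      exfalso
      have h0 : (0:ℝ) < 1 - x^2 := by nlinarith [hx2.1, hx2.2]
      have h1 : 0 < c^2*(1-x^2) := mul_pos (pow_pos hcpos 2) h0
      nlinarith [sq_nonneg (r-c₃*x)]
  have hfin : ({x : ℝ | (s^2-(c₃^2-c^2))*x^2 + (2*(s-r*c₃))*x + (1-c^2-r^2) = 0} ∪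
      {x : ℝ | (s^2-(c₃^2-c^2))*x^2 + (2*(r*c₃-s))*x + (1-c^2-r^2) = 0} ∪
      {x : ℝ | c^2*(1-x^2) + (r-c₃*x)^2 = 0 ∧ x ∈ Set.Ioo (0:ℝ) 1}).Finite :=
    (hEA.union hEB).union hEC
  intro z hz
  have hFG := F_eq_Gfun r s c₃ c hs hHp hHm
  rw [hFG z hz, hFG 1 (by norm_num)]
  apply aux_chain hfin.toFinset.card hfin.toFinset _ z 1 le_rfl hz.2
    ((continuous_Gfun r s c₃ c).continuousOn)
  intro w hw hwE
  have hw0 : 0 < w := lt_of_le_of_lt hz.1 hw.1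
  have hw1 : w < 1 := hw.2
  have hwIcc : w ∈ Set.Icc (0:ℝ) 1 := ⟨hw0.le, hw1.le⟩
  rw [Set.Finite.mem_toFinset] at hwE
  simp only [Set.mem_union, Set.mem_setOf_eq, not_or] at hwE
  obtain ⟨⟨hQA, hQB⟩, hQC⟩ := hwE
  -- positivity of P and Pm at w
  have hP : 0 < c^2*(1-w^2) + (r+c₃*w)^2 := by
    have hpos : 0 < r + c₃*w := by
      rcases hr.eq_or_lt with hr0 | hrpos
      · have hc3pos : 0 < c₃ := lt_of_le_of_ne hc3 (Ne.symm (hrz hr0.symm))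
        nlinarith
      · nlinarith [mul_nonneg hc3 hw0.le]
    nlinarith [mul_nonneg (sq_nonneg c) (by nlinarith : (0:ℝ) ≤ 1 - w^2)]
  have hPm : 0 < c^2*(1-w^2) + (r-c₃*w)^2 := by
    have hnn : (0:ℝ) ≤ c^2*(1-w^2) + (r-c₃*w)^2 := by
      have h6 := mul_nonneg (sq_nonneg c) (by nlinarith : (0:ℝ) ≤ 1 - w^2)
      nlinarith [sq_nonneg (r-c₃*w)]
    rcases hnn.eq_or_lt with h | h
    · exact absurd ⟨h.symm, ⟨hw0, hw1⟩⟩ hQC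
    · exact h
  have hh : 0 < Hp r c₃ c w := by rw [Hp]; exact Real.sqrt_pos.2 hP
  have hk : 0 < Hm r c₃ c w := by rw [Hm]; exact Real.sqrt_pos.2 hPm
  -- strict inequalities
  have hah : Hp r c₃ c w < 1 + s*w := by
    rcases (hHp w hwIcc).lt_or_eq with h | h
    · exact h
    · exfalso
      apply hQA
      have hPe : c^2*(1-w^2) + (r+c₃*w)^2 = (1+s*w)^2 := by
        rw [← h, Hp, Real.sq_sqrt hP.le]
      linear_combination -hPe
  have hbk : Hm r c₃ c w < 1 - s*w := by
    rcases (hHm w hwIcc).lt_or_eq with h | h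
    · exact h
    · exfalso
      apply hQB
      have hPe : c^2*(1-w^2) + (r-c₃*w)^2 = (1-s*w)^2 := by
        rw [← h, Hm, Real.sq_sqrt hPm.le]
      linear_combination -hPe
  have hD := hasDerivAt_Gfun r s c₃ c w hP hPm hah hbk
  refine ⟨hD.differentiableAt, ?_⟩
  rw [hD.deriv]
  apply div_nonneg _ (by nlinarith [Real.log_pos one_lt_two] : (0:ℝ) ≤ 4*Real.log 2)
  have hkh : Hm r c₃ c w ≤ Hp r c₃ c w := by
    rw [Hp, Hm]
    apply Real.sqrt_le_sqrt
    nlinarith [mul_nonneg (mul_nonneg hr hc3) hw0.le]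
  exact aux_bracket_nonneg s w (r*c₃) (c₃^2-c^2) (Hp r c₃ c w) (Hm r c₃ c w)
    hs0 hw0.le (mul_nonneg hr hc3) hmix hh hk hkh hah hbk

lemma aux_F_one (r s c₃ c : ℝ) :
    F r s c₃ c 1 =
      (1/4) * (1 + s + r + c₃) * Real.logb 2 ((1 + s + r + c₃) / (1 + s)) +
      (1/4) * (1 + s - r - c₃) * Real.logb 2 ((1 + s - r - c₃) / (1 + s)) +
      (1/4) * (1 - s + r - c₃) * Real.logb 2 ((1 - s + r - c₃) / (1 - s)) +
      (1/4) * (1 - s - r + c₃) * Real.logb 2 ((1 - s - r + c₃) / (1 - s)) := by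
  have h1 : Hp r c₃ c 1 = |r + c₃| := by
    rw [Hp, show c^2*(1-1^2) + (r+c₃*1)^2 = (r+c₃)^2 by ring, Real.sqrt_sq_eq_abs]
  have h2 : Hm r c₃ c 1 = |r - c₃| := by
    rw [Hm, show c^2*(1-1^2) + (r-c₃*1)^2 = (r-c₃)^2 by ring, Real.sqrt_sq_eq_abs]
  rw [F, h1, h2]
  rcases abs_cases (r+c₃) with ⟨e1, _⟩ | ⟨e1, _⟩ <;>
    rcases abs_cases (r-c₃) with ⟨e2, _⟩ | ⟨e2, _⟩ <;>
      rw [e1, e2] <;> ring_nf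


end QuantumDiscordAux

theorem F_max_at_one_case_b (r s c₃ c : ℝ) (hc : 0 ≤ c) (hs : |s| < 1)
    (hHp : ∀ z ∈ Set.Icc (0:ℝ) 1, Hp r c₃ c z ≤ 1 + s*z)
    (hHm : ∀ z ∈ Set.Icc (0:ℝ) 1, Hm r c₃ c z ≤ 1 - s*z)
    (hs0 : s ≤ 0) (hrc₃ : 0 ≤ r * c₃) (hmix : s * (r * c₃) ≤ c₃^2 - c^2) :
    (∀ z ∈ Set.Icc (0:ℝ) 1, F r s c₃ c z ≤ F r s c₃ c 1) ∧
    F r s c₃ c 1 =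
      (1/4) * (1 + s + r + c₃) * Real.logb 2 ((1 + s + r + c₃) / (1 + s)) +
      (1/4) * (1 + s - r - c₃) * Real.logb 2 ((1 + s - r - c₃) / (1 + s)) +
      (1/4) * (1 - s + r - c₃) * Real.logb 2 ((1 - s + r - c₃) / (1 - s)) +
      (1/4) * (1 - s - r + c₃) * Real.logb 2 ((1 - s - r + c₃) / (1 - s)) := by

  constructor
  · have hdisj : (0 ≤ r ∧ 0 ≤ c₃) ∨ (r ≤ 0 ∧ c₃ ≤ 0) := by
      rcases le_total 0 r with h | h
      · rcases le_total 0 c₃ with h' | h'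
        · exact Or.inl ⟨h, h'⟩
        · have h0 : r * c₃ = 0 :=
            le_antisymm (mul_nonpos_of_nonneg_of_nonpos h h') hrc₃
          rcases mul_eq_zero.1 h0 with h1 | h1
          · exact Or.inr ⟨le_of_eq h1, h'⟩
          · exact Or.inl ⟨h, le_of_eq h1.symm⟩
      · rcases le_total 0 c₃ with h' | h'
        · have h0 : r * c₃ = 0 :=
            le_antisymm (mul_nonpos_of_nonpos_of_nonneg h h') hrc₃
          rcases mul_eq_zero.1 h0 with h1 | h1
          · exact Or.inl ⟨le_of_eq h1.symm, h'⟩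
          · exact Or.inr ⟨h, le_of_eq h1⟩
        · exact Or.inr ⟨h, h'⟩
    rcases hdisj with ⟨hr, hc3⟩ | ⟨hr, hc3⟩
    · exact aux_main r s c₃ c hc hs hr hc3 hHp hHm hs0 hmix
    · have e1 : ∀ z : ℝ, Hp (-r) (-c₃) c z = Hp r c₃ c z := by
        intro z; rw [Hp, Hp]; congr 1; ring
      have e2 : ∀ z : ℝ, Hm (-r) (-c₃) c z = Hm r c₃ c z := by
        intro z; rw [Hm, Hm]; congr 1; ring
      have hFeq : ∀ z : ℝ, F r s c₃ c z = F (-r) s (-c₃) c z := by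
        intro z; rw [F, F, e1, e2]
      intro z hz
      rw [hFeq z, hFeq 1]
      apply aux_main (-r) s (-c₃) c hc hs (neg_nonneg.2 hr) (neg_nonneg.2 hc3)
        (fun z hz => (e1 z) ▸ hHp z hz) (fun z hz => (e2 z) ▸ hHm z hz) hs0
        (by simpa using hmix) z hz
  · exact aux_F_one r s c₃ c
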